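/- Let (A_n, R_n, φ_n^{n+1}) be as in the context, with projective limit 𝔸 and relation R^𝔸. Then R^𝔸 is transitive if and only if for every n and all a, b ∈ A_n such that ¬R_n(a, b) and there exists c with R_n(a, c) and R_n(c, b), there is m > n such that for all a' ∈ (φ_n^m)⁻¹(a) and b' ∈ (φ_n^m)⁻¹(b), one has ¬R_m(a', b') and there is no c' with R_m(a', c') and R_m(c', b'). -/

import Mathlib

/-- The projective (inverse) limit of a sequence of sets with bonding maps. -/
def InvLim (A : ℕ → Type*) (φ : ∀ n, A (n+1) → A n) : Type _ :=
  {u : ∀ n, A n // ∀ n, φ n (u (n+1)) = u n}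

/-- The topology of the projective limit: the subspace topology inside the product of the
discrete spaces `A n`. -/
instance (A : ℕ → Type*) (φ : ∀ n, A (n+1) → A n) : TopologicalSpace (InvLim A φ) :=
  letI : ∀ n, TopologicalSpace (A n) := fun _ => ⊥
  inferInstanceAs (TopologicalSpace {u : ∀ n, A n // ∀ n, φ n (u (n+1)) = u n})

/-- The composite bonding map `φ_n^{n+k} : A (n+k) → A n`. -/
def bond {A : ℕ → Type*} (φ : ∀ n, A (n+1) → A n) (n : ℕ) : ∀ k, A (n + k) → A n
  | 0, a => a
  | k+1, a => bond φ n k (φ (n+k) a)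

/-- The relation `R^𝔸` on the projective limit. -/
def limRel (A : ℕ → Type*) (R : ∀ n, A n → A n → Prop) (φ : ∀ n, A (n+1) → A n)
    (u v : InvLim A φ) : Prop := ∀ n, R n (u.val n) (v.val n)

open CategoryTheory in
lemma konig_aux {B : ℕ → Type*} [∀ k, Finite (B k)] [∀ k, Nonempty (B k)]
    (ψ : ∀ k, B (k+1) → B k) : ∃ s : ∀ k, B k, ∀ k, ψ k (s (k+1)) = s k := by
  let F : ℕᵒᵖ ⥤ Type _ := Functor.ofOpSequence (X := B) (fun n => TypeCat.ofHom (ψ n))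
  haveI : ∀ j : ℕᵒᵖ, Finite (F.obj j) := fun j => ‹∀ k, Finite (B k)› j.unop
  haveI : ∀ j : ℕᵒᵖ, Nonempty (F.obj j) := fun j => ‹∀ k, Nonempty (B k)› j.unop
  obtain ⟨s, hs⟩ := nonempty_sections_of_finite_inverse_system F
  refine ⟨fun k => s (Opposite.op k), fun k => ?_⟩
  have h := hs (f := (homOfLE (Nat.le_add_right k 1)).op)
  rwa [Functor.ofOpSequence_map_homOfLE_succ] at h

lemma bond_val_aux {A : ℕ → Type*} (φ : ∀ n, A (n+1) → A n) (u : InvLim A φ) (n : ℕ) :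
    ∀ k, bond φ n k (u.val (n+k)) = u.val n := by
  intro k
  induction k with
  | zero => rfl
  | succ k ih =>
      show bond φ n k (φ (n+k) (u.val (n+k+1))) = u.val n
      rw [u.2 (n+k)]; exact ih

lemma bond_rel_aux {A : ℕ → Type*} (φ : ∀ n, A (n+1) → A n)
    (R : ∀ n, A n → A n → Prop)
    (him1 : ∀ n, ∀ a b : A (n+1), R (n+1) a b → R n (φ n a) (φ n b))
    (n : ℕ) : ∀ k, ∀ x y : A (n+k), R (n+k) x y → R n (bond φ n k x) (bond φ n k y) := by
  intro k
  induction k with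
  | zero => exact fun x y h => h
  | succ k ih => exact fun x y h => ih _ _ (him1 (n+k) _ _ h)

theorem stmt_6 (A : ℕ → Type*) [∀ n, Fintype (A n)] [∀ n, Nonempty (A n)]
    (R : ∀ n, A n → A n → Prop)
    (hrefl : ∀ n, Reflexive (R n)) (hsymm : ∀ n, Symmetric (R n))
    (φ : ∀ n, A (n+1) → A n) (hsurj : ∀ n, Function.Surjective (φ n))
    (him1 : ∀ n, ∀ a b : A (n+1), R (n+1) a b → R n (φ n a) (φ n b))
    (him2 : ∀ n, ∀ a b : A n, R n a b →
      ∃ a' b' : A (n+1), R (n+1) a' b' ∧ φ n a' = a ∧ φ n b' = b) :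
    Transitive (limRel A R φ) ↔
      ∀ (n : ℕ) (a b : A n), ¬ R n a b → (∃ c, R n a c ∧ R n c b) →
        ∃ k, 0 < k ∧ ∀ a' b' : A (n + k), bond φ n k a' = a → bond φ n k b' = b →
          ¬ R (n + k) a' b' ∧ ¬ ∃ c', R (n + k) a' c' ∧ R (n + k) c' b' := by
  constructor
  · intro htrans n a b hab hc
    by_contra hcon
    push_neg at hcon
    -- for each k > 0, there are preimages a', b' with a chain of length ≤ 2 between them
    have H : ∀ k, 0 < k → ∃ a' b' : A (n + k), bond φ n k a' = a ∧ bond φ n k b' = b ∧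
        ∃ c', R (n+k) a' c' ∧ R (n+k) c' b' := by
      intro k hk
      obtain ⟨a', b', ha', hb', h⟩ := hcon k hk
      refine ⟨a', b', ha', hb', ?_⟩
      rcases Classical.em (R (n+k) a' b') with h1 | h1
      · exact ⟨a', hrefl _ a', h1⟩
      · exact h h1
    -- the inverse system of chains projecting to (a, _, b)
    let T : ℕ → Type _ := fun m => {p : A m × A m × A m //
      R m p.1 p.2.1 ∧ R m p.2.1 p.2.2 ∧
      ∀ k, ∀ h : n + k = m,
        bond φ n k (cast (congrArg A h.symm) p.1) = a ∧
        bond φ n k (cast (congrArg A h.symm) p.2.2) = b}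
    haveI : ∀ m, Finite (T m) := fun m => Subtype.finite
    haveI : ∀ m, Nonempty (T m) := by
      intro m
      rcases lt_or_ge m n with hm | hm
      · obtain ⟨t⟩ := ‹∀ n, Nonempty (A n)› m
        exact ⟨⟨(t, t, t), hrefl _ t, hrefl _ t, fun k h => absurd h (by omega)⟩⟩
      · obtain ⟨k, rfl⟩ := Nat.le.dest hm
        rcases Nat.eq_zero_or_pos k with rfl | hk
        · obtain ⟨c, hac, hcb⟩ := hc
          refine ⟨⟨(a, c, b), hac, hcb, ?_⟩⟩
          intro k' h
          have hk' : k' = 0 := by omega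
          subst hk'
          exact ⟨rfl, rfl⟩
        · obtain ⟨a', b', ha', hb', c', h1, h2⟩ := H k hk
          refine ⟨⟨(a', c', b'), h1, h2, ?_⟩⟩
          intro k' h
          have hk' : k' = k := by omega
          subst hk'
          exact ⟨ha', hb'⟩
    let ψ : ∀ m, T (m+1) → T m := fun m p =>
      ⟨(φ m p.1.1, φ m p.1.2.1, φ m p.1.2.2),
        him1 m _ _ p.2.1, him1 m _ _ p.2.2.1, by
          intro k h
          subst h
          have := p.2.2.2 (k+1) rfl
          exact this⟩
    obtain ⟨s, hs⟩ := konig_aux ψ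
    -- build the three elements of the inverse limit
    let u : InvLim A φ := ⟨fun m => (s m).1.1, fun m => congrArg (fun t => t.1.1) (hs m)⟩
    let v : InvLim A φ := ⟨fun m => (s m).1.2.1, fun m => congrArg (fun t => t.1.2.1) (hs m)⟩
    let w : InvLim A φ := ⟨fun m => (s m).1.2.2, fun m => congrArg (fun t => t.1.2.2) (hs m)⟩
    have huv : limRel A R φ u v := fun m => (s m).2.1
    have hvw : limRel A R φ v w := fun m => (s m).2.2.1
    have huw := htrans huv hvw
    have hn := huw n
    have ha : (s n).1.1 = a := ((s n).2.2.2 0 rfl).1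
    have hb : (s n).1.2.2 = b := ((s n).2.2.2 0 rfl).2
    have hn' : R n ((s n).val.1) ((s n).val.2.2) := hn
    rw [ha, hb] at hn'
    exact hab hn'
  · intro hsep u v w huv hvw n
    by_contra hn
    obtain ⟨k, hk, hprop⟩ := hsep n (u.val n) (w.val n) hn ⟨v.val n, huv n, hvw n⟩
    have h := hprop (u.val (n+k)) (w.val (n+k)) (bond_val_aux φ u n k) (bond_val_aux φ w n k)
    exact h.2 ⟨v.val (n+k), huv (n+k), hvw (n+k)⟩
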